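/- For a connected weighted graph G=(V,E,w,b) with must-link constraint matrix Q^m and cannot-link matrix Q^c, let λ = NCut(C, C̄) for some consistent partition (C, C̄) (one satisfying all constraints). If γ ≥ gvol(V)·λ/(4(l+1)), then any minimizer of F̂_γ(C) := (cut(C,C̄) + γ(M̂(C)+N̂(C)))/bal(C) violates no more than l constraints. -/

import Mathlib

open Finset

/-- cut(C, C̄) = 2 ∑_{i∈C, j∈C̄} w_{ij} -/
noncomputable def cutW {n : ℕ} (w : Fin n → Fin n → ℝ) (C : Finset (Fin n)) : ℝ :=
  2 * ∑ i ∈ C, ∑ j ∈ Cᶜ, w i j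

/-- generalized volume gvol(C) = ∑_{i∈C} b_i -/
noncomputable def gvol {n : ℕ} (b : Fin n → ℝ) (C : Finset (Fin n)) : ℝ := ∑ i ∈ C, b i

/-- bal(C) = 2 gvol(C) gvol(C̄) / gvol(V) -/
noncomputable def bal {n : ℕ} (b : Fin n → ℝ) (C : Finset (Fin n)) : ℝ :=
  2 * gvol b C * gvol b Cᶜ / gvol b Finset.univ

/-- NCut(C,C̄) = cut(C,C̄)/bal(C) -/
noncomputable def ncut {n : ℕ} (w : Fin n → Fin n → ℝ) (b : Fin n → ℝ) (C : Finset (Fin n)) : ℝ :=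
  cutW w C / bal b C

/-- M̂(C) = 2 ∑_{i∈C, j∈C̄} q^m_{ij}, twice the number of violated must-links -/
noncomputable def Mhat {n : ℕ} (qm : Fin n → Fin n → ℝ) (C : Finset (Fin n)) : ℝ :=
  2 * ∑ i ∈ C, ∑ j ∈ Cᶜ, qm i j

/-- N̂(C) = ∑_{i,j∈C} q^c_{ij} + ∑_{i,j∈C̄} q^c_{ij}, twice the number of violated cannot-links -/
noncomputable def Nhat {n : ℕ} (qc : Fin n → Fin n → ℝ) (C : Finset (Fin n)) : ℝ :=
  (∑ i ∈ C, ∑ j ∈ C, qc i j) + ∑ i ∈ Cᶜ, ∑ j ∈ Cᶜ, qc i j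

/-- F̂_γ(C) = (cut(C,C̄) + γ(M̂(C)+N̂(C))) / bal(C) -/
noncomputable def Fhat {n : ℕ} (w : Fin n → Fin n → ℝ) (b : Fin n → ℝ)
    (qm qc : Fin n → Fin n → ℝ) (γ : ℝ) (C : Finset (Fin n)) : ℝ :=
  (cutW w C + γ * (Mhat qm C + Nhat qc C)) / bal b C

/-- Lemma 1: if γ ≥ gvol(V)·λ/(4(l+1)) for λ = NCut of a consistent partition,
then any minimizer of F̂_γ (over nontrivial subsets) violates no more than l constraints,
i.e. M̂(D)+N̂(D) ≤ 2l. -/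
lemma sum01_nat {α : Type*} [DecidableEq α] (T : Finset α) (f : α → ℝ)
    (hf : ∀ p, f p = 0 ∨ f p = 1) : ∃ k : ℕ, ∑ p ∈ T, f p = (k : ℝ) := by
  induction T using Finset.induction_on with
  | empty => exact ⟨0, by simp⟩
  | insert a s ha ih =>
    obtain ⟨k, hk⟩ := ih
    rcases hf _ with h | h
    · exact ⟨k, by rw [Finset.sum_insert ha, h, hk]; ring⟩
    · exact ⟨k + 1, by rw [Finset.sum_insert ha, h, hk]; push_cast; ring⟩

lemma sym_sum_even {n : ℕ} (S : Finset (Fin n)) (f : Fin n → Fin n → ℝ)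
    (hs : ∀ i j, f i j = f j i) (hd : ∀ i, f i i = 0) :
    ∑ i ∈ S, ∑ j ∈ S, f i j
      = 2 * ∑ p ∈ (S ×ˢ S).filter (fun p => p.1 < p.2), f p.1 p.2 := by
  rw [← Finset.sum_product']
  rw [← Finset.sum_filter_add_sum_filter_not (S ×ˢ S) (fun p => p.1 < p.2)]
  have h2 : ∑ p ∈ (S ×ˢ S).filter (fun p => ¬ p.1 < p.2), f p.1 p.2
      = ∑ p ∈ (S ×ˢ S).filter (fun p => p.1 < p.2), f p.1 p.2 := by
    rw [← Finset.sum_filter_add_sum_filter_not ((S ×ˢ S).filter (fun p => ¬ p.1 < p.2))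
        (fun p => p.2 < p.1)]
    have hz : ∑ p ∈ ((S ×ˢ S).filter (fun p => ¬ p.1 < p.2)).filter (fun p => ¬ p.2 < p.1),
        f p.1 p.2 = 0 := by
      apply Finset.sum_eq_zero
      intro p hp
      simp only [Finset.mem_filter] at hp
      have : p.1 = p.2 := le_antisymm (not_lt.mp hp.2) (not_lt.mp hp.1.2)
      rw [this, hd]
    rw [hz, add_zero]
    apply Finset.sum_nbij' (fun p => (p.2, p.1)) (fun p => (p.2, p.1))
    · intro p hp
      simp only [Finset.mem_filter, Finset.mem_product] at hp ⊢
      exact ⟨⟨hp.1.1.2, hp.1.1.1⟩, hp.2⟩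
    · intro p hp
      simp only [Finset.mem_filter, Finset.mem_product] at hp ⊢
      exact ⟨⟨⟨hp.1.2, hp.1.1⟩, not_lt.mpr hp.2.le⟩, hp.2⟩
    · intro p _; rfl
    · intro p _; rfl
    · intro p _; exact hs p.1 p.2
  rw [h2]; ring

theorem stmt_0 {n : ℕ} (w : Fin n → Fin n → ℝ) (b : Fin n → ℝ)
    (qm qc : Fin n → Fin n → ℝ)
    (hw_symm : ∀ i j, w i j = w j i) (hw_nonneg : ∀ i j, 0 ≤ w i j)
    (hb : ∀ i, 0 < b i)
    (hqm01 : ∀ i j, qm i j = 0 ∨ qm i j = 1) (hqm_symm : ∀ i j, qm i j = qm j i)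
    (hqc01 : ∀ i j, qc i j = 0 ∨ qc i j = 1) (hqc_symm : ∀ i j, qc i j = qc j i)
    (hconn : ∀ C : Finset (Fin n), C ≠ ∅ → C ≠ Finset.univ → 0 < cutW w C)
    (C : Finset (Fin n)) (hC₁ : C ≠ ∅) (hC₂ : C ≠ Finset.univ)
    (hcons : Mhat qm C = 0 ∧ Nhat qc C = 0)
    (l : ℕ) (γ : ℝ)
    (hγ : gvol b Finset.univ * ncut w b C / (4 * (l + 1)) ≤ γ)
    (D : Finset (Fin n)) (hD₁ : D ≠ ∅) (hD₂ : D ≠ Finset.univ)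
    (hDmin : ∀ D' : Finset (Fin n), D' ≠ ∅ → D' ≠ Finset.univ →
      Fhat w b qm qc γ D ≤ Fhat w b qm qc γ D') :
    Mhat qm D + Nhat qc D ≤ 2 * l := by
  classical
  have hqc_nonneg : ∀ i j, 0 ≤ qc i j := fun i j => by rcases hqc01 i j with h | h <;> simp [h]
  -- positivity facts
  have hposvol : ∀ S : Finset (Fin n), S ≠ ∅ → 0 < gvol b S := by
    intro S hS
    exact Finset.sum_pos (fun i _ => hb i) (Finset.nonempty_iff_ne_empty.mpr hS)
  have hcompl : ∀ S : Finset (Fin n), S ≠ Finset.univ → Sᶜ ≠ ∅ := by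
    intro S hS h
    exact hS (by simpa using congrArg (·ᶜ) h)
  have hvolC : 0 < gvol b C := hposvol C hC₁
  have hvolCc : 0 < gvol b Cᶜ := hposvol _ (hcompl C hC₂)
  have hvolD : 0 < gvol b D := hposvol D hD₁
  have hvolDc : 0 < gvol b Dᶜ := hposvol _ (hcompl D hD₂)
  have hsplit : ∀ S : Finset (Fin n), gvol b S + gvol b Sᶜ = gvol b Finset.univ := by
    intro S; exact Finset.sum_add_sum_compl S b
  have hvolU : 0 < gvol b Finset.univ := by
    rw [← hsplit C]; linarith
  have hbalC : 0 < bal b C := by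
    unfold bal; positivity
  have hbalD : 0 < bal b D := by
    unfold bal; positivity
  have hbalD_le : bal b D ≤ gvol b Finset.univ / 2 := by
    unfold bal
    rw [div_le_div_iff₀ hvolU (by norm_num : (0:ℝ) < 2)]
    nlinarith [hsplit D, sq_nonneg (gvol b D - gvol b Dᶜ)]
  set lam := ncut w b C with hlam
  have hcutC : 0 < cutW w C := hconn C hC₁ hC₂
  have hlam_pos : 0 < lam := div_pos hcutC hbalC
  have hγpos : 0 < γ := by
    have : 0 < gvol b Finset.univ * lam / (4 * (l + 1)) := by positivity
    linarith
  -- Fhat C = lam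
  have hFC : Fhat w b qm qc γ C = lam := by
    unfold Fhat
    rw [hcons.1, hcons.2]
    simp [hlam, ncut]
  have hFD := hDmin C hC₁ hC₂
  rw [hFC] at hFD
  set P := Mhat qm D + Nhat qc D with hP
  have hkey : cutW w D + γ * P ≤ lam * bal b D := by
    have h' := hFD
    unfold Fhat at h'
    rw [div_le_iff₀ hbalD] at h'
    have hγP : γ * P = γ * (Mhat qm D + Nhat qc D) := by rw [hP]
    linarith
  have hcutD : 0 < cutW w D := hconn D hD₁ hD₂
  have hPlt : γ * P < 2 * (l + 1) * γ := by
    have h1 : gvol b Finset.univ * lam ≤ 4 * (l + 1) * γ := by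
      rw [div_le_iff₀ (by positivity : (0:ℝ) < 4 * (l + 1))] at hγ
      linarith
    have h2 : lam * bal b D ≤ lam * (gvol b Finset.univ / 2) :=
      mul_le_mul_of_nonneg_left hbalD_le hlam_pos.le
    nlinarith
  have hPlt2 : P < 2 * (l + 1) := by
    nlinarith
  -- parity / integrality of P
  -- qc has zero diagonal
  have hNC := hcons.2
  have hA : ∀ S : Finset (Fin n), ∀ i ∈ S, ∀ j ∈ S,
      (∑ i ∈ S, ∑ j ∈ S, qc i j) = 0 → qc i j = 0 := by
    intro S i hi j hj hsum
    have h1 := (Finset.sum_eq_zero_iff_of_nonneg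
      (fun i _ => Finset.sum_nonneg (fun j _ => hqc_nonneg i j))).mp hsum i hi
    exact (Finset.sum_eq_zero_iff_of_nonneg (fun j _ => hqc_nonneg i j)).mp h1 j hj
  have hCC : (∑ i ∈ C, ∑ j ∈ C, qc i j) = 0 ∧ (∑ i ∈ Cᶜ, ∑ j ∈ Cᶜ, qc i j) = 0 := by
    have h1 : 0 ≤ ∑ i ∈ C, ∑ j ∈ C, qc i j :=
      Finset.sum_nonneg fun i _ => Finset.sum_nonneg fun j _ => hqc_nonneg i j
    have h2 : 0 ≤ ∑ i ∈ Cᶜ, ∑ j ∈ Cᶜ, qc i j :=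
      Finset.sum_nonneg fun i _ => Finset.sum_nonneg fun j _ => hqc_nonneg i j
    unfold Nhat at hNC
    constructor <;> linarith
  have hdiag : ∀ i, qc i i = 0 := by
    intro i
    by_cases hi : i ∈ C
    · exact hA C i hi i hi hCC.1
    · exact hA Cᶜ i (Finset.mem_compl.mpr hi) i (Finset.mem_compl.mpr hi) hCC.2
  -- express P as 2 * nat
  obtain ⟨ka, hka⟩ := sum01_nat (D ×ˢ Dᶜ) (fun p => qm p.1 p.2) (fun p => hqm01 p.1 p.2)
  obtain ⟨kb, hkb⟩ := sum01_nat ((D ×ˢ D).filter (fun p => p.1 < p.2))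
    (fun p => qc p.1 p.2) (fun p => hqc01 p.1 p.2)
  obtain ⟨kc, hkc⟩ := sum01_nat ((Dᶜ ×ˢ Dᶜ).filter (fun p => p.1 < p.2))
    (fun p => qc p.1 p.2) (fun p => hqc01 p.1 p.2)
  have hM : Mhat qm D = 2 * (ka : ℝ) := by
    unfold Mhat; rw [← Finset.sum_product', hka]
  have hN : Nhat qc D = 2 * (kb : ℝ) + 2 * (kc : ℝ) := by
    unfold Nhat
    rw [sym_sum_even D qc hqc_symm hdiag, sym_sum_even Dᶜ qc hqc_symm hdiag, hkb, hkc]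
  have hPeq : P = 2 * ((ka + kb + kc : ℕ) : ℝ) := by
    rw [hP, hM, hN]; push_cast; ring
  rw [hPeq] at hPlt2 ⊢
  have : ((ka + kb + kc : ℕ) : ℝ) < (l : ℝ) + 1 := by linarith
  have hle : (ka + kb + kc : ℕ) ≤ l := by
    exact_mod_cast Nat.lt_succ_iff.mp (by exact_mod_cast this)
  have : ((ka + kb + kc : ℕ) : ℝ) ≤ (l : ℝ) := by exact_mod_cast hle
  linarith
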